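/- Let α and β be classical propositional formulas such that every valuation on B_α ∪ B_β that satisfies α also satisfies β (i.e. α classically entails β). Then Prob(α) ≤ Prob(β). -/

import Mathlib

open scoped InnerProductSpace

noncomputable section

/-- Classical propositional formulas, built from propositional symbols `B_j` (`j : ℕ`)
and `⊤` using `¬` and `→`. -/
inductive PropForm : Type
  | verum : PropForm
  | var : ℕ → PropForm
  | neg : PropForm → PropForm
  | imp : PropForm → PropForm → PropForm

namespace PropForm

/-- The (finite) set of propositional symbols occurring in a formula. -/
def symbols : PropForm → Finset ℕ
  | verum => ∅
  | var n => {n}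
  | neg a => a.symbols
  | imp a b => a.symbols ∪ b.symbols

/-- Truth-table evaluation of a formula under a (total) assignment of truth values. -/
def eval (w : ℕ → Bool) : PropForm → Bool
  | verum => true
  | var n => w n
  | neg a => !(a.eval w)
  | imp a b => !(a.eval w) || b.eval w

theorem eval_congr {w w' : ℕ → Bool} :
    ∀ α : PropForm, (∀ n ∈ α.symbols, w n = w' n) → α.eval w = α.eval w'
  | verum, _ => rfl
  | var n, h => h n (by simp [symbols])
  | neg a, h => by
      simp only [eval, eval_congr a h]
  | imp a b, h => by
      simp only [eval,
        eval_congr a (fun n hn => h n (by simp [symbols, hn])),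
        eval_congr b (fun n hn => h n (by simp [symbols, hn]))]

end PropForm

/-- A valuation `v` on a set `A` of propositional symbols (with `A ⊇ B_α`) satisfies `α`. -/
def Sat (A : Finset ℕ) (v : {n // n ∈ A} → Bool) (α : PropForm) : Prop :=
  PropForm.eval (fun n => if h : n ∈ A then v ⟨n, h⟩ else false) α = true

instance (A : Finset ℕ) (α : PropForm) : DecidablePred (fun v => Sat A v α) := fun _ => by
  unfold Sat; infer_instance

variable {ι H : Type*} [NormedAddCommGroup H] [InnerProductSpace ℂ H] [CompleteSpace H]

/-- `Hs u S` is the topological closure of the linear span of `{u i : i ∈ S}`. -/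
def Hs (u : HilbertBasis ι ℂ H) (S : Set ι) : Submodule ℂ H :=
  (Submodule.span ℂ ((fun i => u i) '' S)).topologicalClosure

instance (u : HilbertBasis ι ℂ H) (S : Set ι) : (Hs u S).HasOrthogonalProjection :=
  haveI : CompleteSpace (Hs u S) :=
    IsClosed.completeSpace_coe (hs := Submodule.isClosed_topologicalClosure _)
  Submodule.HasOrthogonalProjection.ofCompleteSpace _

/-- The orthogonal projection of `H` onto `Hs u S`, as an operator on `H`. -/
def P (u : HilbertBasis ι ℂ H) (S : Set ι) : H →L[ℂ] H :=
  (Hs u S).subtypeL.comp ((Hs u S).orthogonalProjectionOnto)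

/-- `Pj u lam j S` is the orthogonal projection onto the closure of the span of
`{u i : lam j i ∈ S}`. -/
def Pj (u : HilbertBasis ι ℂ H) (lam : ℕ → ι → ℝ) (j : ℕ) (S : Set ℝ) : H →L[ℂ] H :=
  P u {i | lam j i ∈ S}

/-- `Prob u lam up ψ α` is the probability assigned to the classical formula `α`:
the sum, over the valuations `v` on `B_α` satisfying `α`, of
`Re ⟪ψ, P_{j_k}(D_{j_k}^v)(⋯ (P_{j_1}(D_{j_1}^v) ψ) ⋯)⟫` where `B_α = {j_1 < … < j_k}`
and `D_j^v` is `up j` if `v (B_j) = 1` and its complement otherwise. -/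
def Prob (u : HilbertBasis ι ℂ H) (lam : ℕ → ι → ℝ) (up : ℕ → Set ℝ) (ψ : H)
    (α : PropForm) : ℝ :=
  ∑ v ∈ Finset.univ.filter (fun v : {n // n ∈ α.symbols} → Bool => Sat α.symbols v α),
    (⟪ψ, (α.symbols.sort (· ≤ ·)).foldl
        (fun x j => if h : j ∈ α.symbols then
            Pj u lam j (if v ⟨j, h⟩ then up j else (up j)ᶜ) x
          else x) ψ⟫_ℂ).re

/-! ### Auxiliary lemmas -/

lemma mem_Hs (u : HilbertBasis ι ℂ H) {S : Set ι} {i : ι} (hi : i ∈ S) :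
    (u i : H) ∈ Hs u S :=
  Submodule.le_topologicalClosure _ (Submodule.subset_span ⟨i, hi, rfl⟩)

lemma inner_eq_zero_of_not_mem (u : HilbertBasis ι ℂ H) {S : Set ι} {i : ι} (hi : i ∉ S)
    {y : H} (hy : y ∈ Hs u S) : ⟪(u i : H), y⟫_ℂ = 0 := by
  have hker : Hs u S ≤ LinearMap.ker ((innerSL ℂ (u i : H)) : H →ₗ[ℂ] ℂ) := by
    apply Submodule.topologicalClosure_minimal
    · rw [Submodule.span_le]
      rintro - ⟨j, hj, rfl⟩
      have hne : i ≠ j := fun h => hi (h ▸ hj)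
      simpa [LinearMap.mem_ker] using u.orthonormal.2 hne
    · exact ContinuousLinearMap.isClosed_ker (innerSL ℂ (u i : H))
  simpa [LinearMap.mem_ker] using hker hy

open Classical in
lemma repr_P (u : HilbertBasis ι ℂ H) (S : Set ι) (x : H) (i : ι) :
    u.repr (P u S x) i = if i ∈ S then u.repr x i else 0 := by
  have hmem : P u S x ∈ Hs u S := ((Hs u S).orthogonalProjectionOnto x).2
  by_cases hi : i ∈ S
  · rw [if_pos hi, HilbertBasis.repr_apply_apply, HilbertBasis.repr_apply_apply]
    have h1 : x - P u S x ∈ (Hs u S)ᗮ := Submodule.sub_starProjection_mem_orthogonal x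
    have h2 : ⟪(u i : H), x - P u S x⟫_ℂ = 0 :=
      (Submodule.mem_orthogonal _ _).1 h1 _ (mem_Hs u hi)
    rw [inner_sub_right, sub_eq_zero] at h2
    exact h2.symm
  · rw [if_neg hi, HilbertBasis.repr_apply_apply]
    exact inner_eq_zero_of_not_mem u hi hmem

open Classical in
lemma repr_foldl_P (u : HilbertBasis ι ℂ H) (D : ℕ → Set ι) :
    ∀ (l : List ℕ) (x : H) (i : ι),
      u.repr (l.foldl (fun y j => P u (D j) y) x) i
        = if ∀ j ∈ l, i ∈ D j then u.repr x i else 0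
  | [], x, i => by simp
  | j :: l, x, i => by
      rw [List.foldl_cons, repr_foldl_P u D l (P u (D j) x) i, repr_P]
      by_cases h1 : ∀ k ∈ l, i ∈ D k <;> by_cases h2 : i ∈ D j <;>
        simp [List.forall_mem_cons, h1, h2]

lemma foldl_congr_aux {γ δ : Type*} (f g : δ → γ → δ) :
    ∀ (l : List γ) (x : δ), (∀ j ∈ l, ∀ y, f y j = g y j) → l.foldl f x = l.foldl g x
  | [], _, _ => rfl
  | j :: l, x, h => by
      rw [List.foldl_cons, List.foldl_cons, h j (by simp)]
      exact foldl_congr_aux f g l _ (fun k hk y => h k (by simp [hk]) y)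

lemma summable_normsq (u : HilbertBasis ι ℂ H) (ψ : H) :
    Summable fun i => ‖u.repr ψ i‖ ^ 2 := by
  have h := u.summable_inner_mul_inner ψ ψ
  have h2 := h.map Complex.reAddGroupHom Complex.continuous_re
  convert h2 using 2 with i
  rw [Function.comp_apply, Complex.coe_reAddGroupHom, ← HilbertBasis.repr_apply_apply,
    ← inner_conj_symm ψ (u i), HilbertBasis.repr_apply_apply, RCLike.conj_mul]
  norm_cast

open Classical in
lemma summable_ite_normsq (u : HilbertBasis ι ℂ H) (ψ : H) {p : ι → Prop}
    [DecidablePred p] : Summable fun i => if p i then ‖u.repr ψ i‖ ^ 2 else 0 := by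
  refine Summable.of_nonneg_of_le (fun i => ?_) (fun i => ?_) (summable_normsq u ψ)
  · split <;> positivity
  · split
    · exact le_refl _
    · positivity

open Classical in
lemma Prob_eq (u : HilbertBasis ι ℂ H) (lam : ℕ → ι → ℝ) (up : ℕ → Set ℝ) (ψ : H)
    (α : PropForm) :
    Prob u lam up ψ α
      = ∑' i : ι, (if α.eval (fun j => decide (lam j i ∈ up j))
          then ‖u.repr ψ i‖ ^ 2 else 0) := by
  classical
  set A := α.symbols with hA
  set wv : ι → ({n // n ∈ A} → Bool) := fun i n => decide (lam n.1 i ∈ up n.1) with hwv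
  have hc := summable_normsq u ψ
  have key : ∀ v ∈ Finset.univ.filter (fun v : {n // n ∈ A} → Bool => Sat A v α),
      (⟪ψ, (A.sort (· ≤ ·)).foldl
          (fun x j => if h : j ∈ α.symbols then
              Pj u lam j (if v ⟨j, h⟩ then up j else (up j)ᶜ) x
            else x) ψ⟫_ℂ).re
        = ∑' i : ι, (if v = wv i then ‖u.repr ψ i‖ ^ 2 else 0) := by
    intro v _
    set D : ℕ → Set ι := fun j =>
      if h : j ∈ α.symbols then {i | lam j i ∈ (if v ⟨j, h⟩ then up j else (up j)ᶜ)}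
      else Set.univ with hD
    have hfold : (A.sort (· ≤ ·)).foldl
        (fun x j => if h : j ∈ α.symbols then
            Pj u lam j (if v ⟨j, h⟩ then up j else (up j)ᶜ) x
          else x) ψ
        = (A.sort (· ≤ ·)).foldl (fun y j => P u (D j) y) ψ := by
      apply foldl_congr_aux
      intro j hj y
      have hjA : j ∈ α.symbols := (Finset.mem_sort (α := ℕ) (· ≤ ·)).1 hj
      simp only [dif_pos hjA, hD, Pj]
    rw [hfold]
    set y := (A.sort (· ≤ ·)).foldl (fun y j => P u (D j) y) ψ with hy
    have hDiff : ∀ (i : ι) (n : {n // n ∈ A}), i ∈ D n.1 ↔ v n = wv i n := by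
      intro i n
      rw [hD]
      simp only [dif_pos n.2]
      cases hv : v n <;> simp [hwv, hv]
    have hrepr : ∀ i, u.repr y i = if v = wv i then u.repr ψ i else 0 := by
      intro i
      rw [hy, repr_foldl_P]
      congr 1
      simp only [eq_iff_iff]
      constructor
      · intro hall
        funext n
        exact (hDiff i n).1 (hall n.1 ((Finset.mem_sort _).2 n.2))
      · intro heq j hj
        have hjA : j ∈ A := (Finset.mem_sort (α := ℕ) (· ≤ ·)).1 hj
        exact (hDiff i ⟨j, hjA⟩).2 (by rw [heq])
    have hinner : ⟪ψ, y⟫_ℂ = ∑' i, ⟪ψ, (u i : H)⟫_ℂ * ⟪(u i : H), y⟫_ℂ :=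
      (u.tsum_inner_mul_inner ψ y).symm
    rw [hinner, Complex.re_tsum (u.summable_inner_mul_inner ψ y)]
    apply tsum_congr
    intro i
    rw [← HilbertBasis.repr_apply_apply, hrepr i]
    by_cases hvi : v = wv i
    · rw [if_pos hvi, if_pos hvi, ← inner_conj_symm ψ (u i),
        HilbertBasis.repr_apply_apply, RCLike.conj_mul]
      norm_cast
    · rw [if_neg hvi, if_neg hvi, mul_zero, Complex.zero_re]
  unfold Prob
  rw [Finset.sum_congr rfl key, ← Summable.tsum_finsetSum (fun v _ => summable_ite_normsq u ψ)]
  apply tsum_congr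
  intro i
  rw [Finset.sum_ite_eq' _ (wv i) (fun _ => ‖u.repr ψ i‖ ^ 2)]
  have hsat : Sat A (wv i) α ↔ α.eval (fun j => decide (lam j i ∈ up j)) = true := by
    unfold Sat
    rw [PropForm.eval_congr α (w' := fun j => decide (lam j i ∈ up j))
      (fun n hn => by rw [dif_pos hn])]
  by_cases h : α.eval (fun j => decide (lam j i ∈ up j)) = true
  · rw [if_pos h, if_pos (by simp [hsat, h])]
  · rw [if_neg h, if_neg (by simp [hsat, h])]

/-- If every valuation on `B_α ∪ B_β` satisfying `α` also satisfies `β`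
(`α` classically entails `β`), then `Prob(α) ≤ Prob(β)`. -/
theorem stmt7 (u : HilbertBasis ι ℂ H) (ψ : H) (hψ : ‖ψ‖ = 1)
    (O : ℕ → H →L[ℂ] H) (lam : ℕ → ι → ℝ)
    (heig : ∀ j i, O j (u i) = (lam j i : ℂ) • u i) (up : ℕ → Set ℝ) (α β : PropForm)
    (hent : ∀ w : {n // n ∈ α.symbols ∪ β.symbols} → Bool,
        Sat (α.symbols ∪ β.symbols) w α → Sat (α.symbols ∪ β.symbols) w β) :
    Prob u lam up ψ α ≤ Prob u lam up ψ β := by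
  classical
  rw [Prob_eq, Prob_eq]
  refine Summable.tsum_le_tsum (fun i => ?_) (summable_ite_normsq u ψ) (summable_ite_normsq u ψ)
  set w : ℕ → Bool := fun j => decide (lam j i ∈ up j) with hw
  by_cases hα : α.eval w = true
  · have hβ : β.eval w = true := by
      set v : {n // n ∈ α.symbols ∪ β.symbols} → Bool := fun n => w n.1 with hv
      have hevals : ∀ γ : PropForm, γ.symbols ⊆ α.symbols ∪ β.symbols →
          PropForm.eval (fun n => if h : n ∈ α.symbols ∪ β.symbols then v ⟨n, h⟩ else false) γ
            = γ.eval w := by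
        intro γ hγ
        exact PropForm.eval_congr γ (fun n hn => by rw [dif_pos (hγ hn)])
      have hsα : Sat (α.symbols ∪ β.symbols) v α := by
        unfold Sat
        rw [hevals α Finset.subset_union_left]
        exact hα
      have hsβ := hent v hsα
      unfold Sat at hsβ
      rwa [hevals β Finset.subset_union_right] at hsβ
    rw [if_pos hα, if_pos hβ]
  · rw [if_neg hα]
    split <;> positivity

end
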